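/- For subsets X, Y of {1,...,n}, the product e_X e_Y in the Kiselman semigroup K_n is an idempotent if and only if e_X e_Y = e_{X∪Y}, which holds if and only if every i ∈ X∖Y is greater than every j ∈ Y∖X. -/

import Mathlib

/-- The defining relations of the Kiselman semigroup `K_n`:
`aᵢ² = aᵢ`, and `aᵢaⱼaᵢ = aⱼaᵢaⱼ = aⱼaᵢ` for `i < j`. -/
inductive KisRel (n : ℕ) : FreeMonoid (Fin n) → FreeMonoid (Fin n) → Prop
  | idem (i : Fin n) : KisRel n (.of i * .of i) (.of i)
  | braid₁ {i j : Fin n} (h : i < j) :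
      KisRel n (.of i * .of j * .of i) (.of j * .of i)
  | braid₂ {i j : Fin n} (h : i < j) :
      KisRel n (.of j * .of i * .of j) (.of j * .of i)

/-- The Kiselman semigroup (monoid) `K_n`. -/
abbrev Kiselman (n : ℕ) := PresentedMonoid (KisRel n)

/-- The canonical projection from the free monoid on the generators to `K_n`. -/
def kmk (n : ℕ) : FreeMonoid (Fin n) →* Kiselman n := PresentedMonoid.mk (KisRel n)

/-- The generator `a_{i+1}` (0-indexed: `ka i` is the paper's `a_{i+1}`). -/
def ka {n : ℕ} (i : Fin n) : Kiselman n := PresentedMonoid.of (KisRel n) i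

/-- The idempotent `e_X`: the product of the generators indexed by `X` in strictly
decreasing order of indices. -/
def eX {n : ℕ} (X : Finset (Fin n)) : Kiselman n :=
  kmk n (FreeMonoid.ofList ((X.sort (· ≤ ·)).reverse))

namespace KisAux
variable {n : ℕ}

lemma krel {a b : FreeMonoid (Fin n)} (h : KisRel n a b) : kmk n a = kmk n b :=
  Quotient.sound (ConGen.Rel.of a b h)

lemma ka_idem (i : Fin n) : ka i * ka i = ka i := krel (KisRel.idem i)
lemma braid₁ {i j : Fin n} (h : i < j) : ka i * ka j * ka i = ka j * ka i :=
  krel (KisRel.braid₁ h)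
lemma braid₂ {i j : Fin n} (h : i < j) : ka j * ka i * ka j = ka j * ka i :=
  krel (KisRel.braid₂ h)

def eL (L : List (Fin n)) : Kiselman n := kmk n (FreeMonoid.ofList L)
lemma eL_nil : eL ([] : List (Fin n)) = 1 := rfl
lemma eL_cons (x : Fin n) (L : List (Fin n)) : eL (x :: L) = ka x * eL L := rfl
lemma eL_append (L M : List (Fin n)) : eL (L ++ M) = eL L * eL M := rfl
lemma eX_eq (X : Finset (Fin n)) : eX X = eL ((X.sort (· ≤ ·)).reverse) := rfl

lemma absorbR (j : Fin n) : ∀ L : List (Fin n), (∀ x ∈ L, x < j) →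
    ka j * (eL L * ka j) = ka j * eL L := by
  intro L
  induction L with
  | nil => intro _; simp [eL_nil, ka_idem]
  | cons i u ih =>
    intro h
    have hij : i < j := h i (by simp)
    have ih' := ih (fun x hx => h x (List.mem_cons_of_mem _ hx))
    have key : ∀ c : Kiselman n, ka j * (ka i * c) = ka j * (ka i * (ka j * c)) := by
      intro c
      rw [← mul_assoc, ← mul_assoc, ← mul_assoc, braid₂ hij]
    calc ka j * (eL (i :: u) * ka j)
        = ka j * (ka i * (eL u * ka j)) := by rw [eL_cons, mul_assoc]
      _ = ka j * (ka i * (ka j * (eL u * ka j))) := key _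
      _ = ka j * (ka i * (ka j * eL u)) := by rw [ih']
      _ = ka j * (ka i * eL u) := (key _).symm
      _ = ka j * eL (i :: u) := by rw [eL_cons]

lemma absorbL (i : Fin n) : ∀ L : List (Fin n), (∀ x ∈ L, i < x) →
    ka i * (eL L * ka i) = eL L * ka i := by
  intro L
  induction L with
  | nil => intro _; simp [eL_nil, ka_idem]
  | cons j u ih =>
    intro h
    have hij : i < j := h j (by simp)
    have ih' := ih (fun x hx => h x (List.mem_cons_of_mem _ hx))
    calc ka i * (eL (j :: u) * ka i)
        = ka i * (ka j * (eL u * ka i)) := by rw [eL_cons, mul_assoc]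
      _ = ka i * (ka j * (ka i * (eL u * ka i))) := by rw [ih']
      _ = ((ka i * ka j) * ka i) * (eL u * ka i) := by simp only [mul_assoc]
      _ = (ka j * ka i) * (eL u * ka i) := by rw [braid₁ hij]
      _ = ka j * (ka i * (eL u * ka i)) := by simp only [mul_assoc]
      _ = ka j * (eL u * ka i) := by rw [ih']
      _ = eL (j :: u) * ka i := by rw [eL_cons, mul_assoc]

lemma absorb_mem (x : Fin n) (u v : List (Fin n)) (hu : ∀ y ∈ u, x < y) :
    ka x * eL (u ++ x :: v) = eL (u ++ x :: v) := by
  have h1 : eL (u ++ x :: v) = (eL u * ka x) * eL v := by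
    rw [eL_append, eL_cons, mul_assoc]
  rw [h1, ← mul_assoc, ← mul_assoc]
  rw [mul_assoc (ka x), absorbL x u hu]

lemma absorb_eX {x : Fin n} {Y : Finset (Fin n)} (hx : x ∈ Y) : ka x * eX Y = eX Y := by
  obtain ⟨u, v, huv⟩ := List.append_of_mem
    (show x ∈ (Y.sort (· ≤ ·)).reverse by simp [Finset.mem_sort, hx])
  have hsorted : ((Y.sort (· ≤ ·)).reverse).Pairwise (· > ·) := by
    rw [List.pairwise_reverse]
    exact Y.sortedLT_sort.pairwise
  rw [huv] at hsorted
  have hu : ∀ y ∈ u, x < y := fun y hy =>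
    (List.pairwise_append.mp hsorted).2.2 y hy x (by simp)
  rw [eX_eq, huv]
  exact absorb_mem x u v hu

lemma prefix_absorb : ∀ (L : List (Fin n)) (Y : Finset (Fin n)),
    (∀ x ∈ L, x ∈ Y) → eL L * eX Y = eX Y := by
  intro L
  induction L with
  | nil => intro Y _; simp [eL_nil]
  | cons x M ih =>
    intro Y h
    rw [eL_cons, mul_assoc, ih Y (fun y hy => h y (List.mem_cons_of_mem _ hy)),
      absorb_eX (h x (by simp))]

lemma subset_absorb {X Y : Finset (Fin n)} (h : X ⊆ Y) : eX X * eX Y = eX Y := by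
  rw [eX_eq X]
  exact prefix_absorb _ Y (fun x hx => h (by simpa [Finset.mem_sort] using hx))

lemma eX_idem (Z : Finset (Fin n)) : IsIdempotentElem (eX Z) :=
  subset_absorb (le_refl Z)

lemma eX_insert {m : Fin n} {X' : Finset (Fin n)} (hm : ∀ x ∈ X', x < m) :
    eX (insert m X') = ka m * eX X' := by
  have hnotmem : m ∉ X' := fun h => lt_irrefl m (hm m h)
  have hsort : (insert m X').sort (· ≤ ·) = X'.sort (· ≤ ·) ++ [m] := by
    apply fun h1 h2 => List.Perm.eq_of_pairwise' (Finset.pairwise_sort _ _) h2 h1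
    · refine ((Finset.sort_perm_toList _ _).trans
        ((Finset.toList_insert hnotmem))).trans ?_
      refine List.Perm.trans ?_ List.perm_append_comm
      exact List.Perm.cons m ((Finset.sort_perm_toList _ _).symm)
    · refine List.pairwise_append.mpr ⟨Finset.pairwise_sort _ _, by simp, ?_⟩
      intro x hx y hy
      rw [List.mem_singleton] at hy
      subst hy
      exact (hm x (by simpa [Finset.mem_sort] using hx)).le
  rw [eX_eq, eX_eq, hsort]
  simp only [List.reverse_append, List.reverse_singleton, List.singleton_append]
  rw [eL_cons]

lemma eX_empty : eX (∅ : Finset (Fin n)) = 1 := by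
  rw [eX_eq, Finset.sort_empty]; rfl

lemma main : ∀ (N : ℕ) (X Y : Finset (Fin n)), (X ∪ Y).card ≤ N →
    (∀ i ∈ X \ Y, ∀ j ∈ Y \ X, j < i) → eX X * eX Y = eX (X ∪ Y) := by
  intro N
  induction N with
  | zero =>
    intro X Y hcard _
    obtain ⟨hXe, hYe⟩ := Finset.union_eq_empty.mp
      (Finset.card_eq_zero.mp (Nat.le_zero.mp hcard))
    subst hXe; subst hYe
    simp [eX_empty]
  | succ N ih =>
    intro X Y hcard hcond
    rcases (X ∪ Y).eq_empty_or_nonempty with h0 | hne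
    · obtain ⟨hXe, hYe⟩ := Finset.union_eq_empty.mp h0
      subst hXe; subst hYe
      simp [eX_empty]
    · set m := (X ∪ Y).max' hne with hmdef
      have hmax : ∀ x ∈ X ∪ Y, x ≤ m := fun x hx => Finset.le_max' _ x hx
      have hmem : m ∈ X ∪ Y := Finset.max'_mem _ hne
      by_cases hX : m ∈ X
      · set X' := X.erase m with hX'def
        have hX'lt : ∀ x ∈ X', x < m := fun x hx =>
          lt_of_le_of_ne (hmax x (Finset.mem_union_left _ (Finset.mem_of_mem_erase hx)))
            (Finset.ne_of_mem_erase hx)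
        have heX : eX X = ka m * eX X' := by rw [← eX_insert hX'lt, Finset.insert_erase hX]
        by_cases hY : m ∈ Y
        · -- m ∈ X ∩ Y
          set Y' := Y.erase m with hY'def
          have hY'lt : ∀ x ∈ Y', x < m := fun x hx =>
            lt_of_le_of_ne (hmax x (Finset.mem_union_right _ (Finset.mem_of_mem_erase hx)))
              (Finset.ne_of_mem_erase hx)
          have heY : eX Y = ka m * eX Y' := by rw [← eX_insert hY'lt, Finset.insert_erase hY]
          have hU : X' ∪ Y' = (X ∪ Y).erase m := by
            ext x
            simp only [Finset.mem_union, Finset.mem_erase, hX'def, hY'def]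
            tauto
          have hcard' : (X' ∪ Y').card ≤ N := by
            rw [hU, Finset.card_erase_of_mem hmem]
            omega
          have hcond' : ∀ i ∈ X' \ Y', ∀ j ∈ Y' \ X', j < i := by
            intro i hi j hj
            rw [Finset.mem_sdiff] at hi hj
            apply hcond
            · rw [Finset.mem_sdiff]
              exact ⟨Finset.mem_of_mem_erase hi.1,
                fun h => hi.2 (Finset.mem_erase.mpr ⟨Finset.ne_of_mem_erase hi.1, h⟩)⟩
            · rw [Finset.mem_sdiff]
              exact ⟨Finset.mem_of_mem_erase hj.1,
                fun h => hj.2 (Finset.mem_erase.mpr ⟨Finset.ne_of_mem_erase hj.1, h⟩)⟩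
          have hih := ih X' Y' hcard' hcond'
          have hUlt : ∀ x ∈ X' ∪ Y', x < m := by
            intro x hx
            rw [hU] at hx
            exact lt_of_le_of_ne (hmax x (Finset.mem_of_mem_erase hx)) (Finset.ne_of_mem_erase hx)
          have hXY : X ∪ Y = insert m (X' ∪ Y') := by rw [hU, Finset.insert_erase hmem]
          calc eX X * eX Y = (ka m * eX X') * (ka m * eX Y') := by rw [heX, heY]
            _ = (ka m * (eX X' * ka m)) * eX Y' := by simp only [mul_assoc]
            _ = (ka m * eX X') * eX Y' := by
                rw [eX_eq X', absorbR m _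
                  (fun x hx => hX'lt x (by simpa [Finset.mem_sort] using hx))]
            _ = ka m * (eX X' * eX Y') := mul_assoc _ _ _
            _ = ka m * eX (X' ∪ Y') := by rw [hih]
            _ = eX (X ∪ Y) := by rw [hXY, eX_insert hUlt]
        · -- m ∈ X \ Y
          have hU : X' ∪ Y = (X ∪ Y).erase m := by
            ext x
            simp only [Finset.mem_union, Finset.mem_erase, hX'def]
            constructor
            · rintro (⟨hne, hx⟩ | hx)
              · exact ⟨hne, Or.inl hx⟩
              · exact ⟨fun h => hY (h ▸ hx), Or.inr hx⟩
            · rintro ⟨hne, hx | hx⟩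
              · exact Or.inl ⟨hne, hx⟩
              · exact Or.inr hx
          have hcard' : (X' ∪ Y).card ≤ N := by
            rw [hU, Finset.card_erase_of_mem hmem]
            omega
          have hcond' : ∀ i ∈ X' \ Y, ∀ j ∈ Y \ X', j < i := by
            intro i hi j hj
            rw [Finset.mem_sdiff] at hi hj
            apply hcond
            · exact Finset.mem_sdiff.mpr ⟨Finset.mem_of_mem_erase hi.1, hi.2⟩
            · refine Finset.mem_sdiff.mpr ⟨hj.1, fun h => hj.2 (Finset.mem_erase.mpr ⟨?_, h⟩)⟩
              rintro rfl
              exact hY hj.1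
          have hih := ih X' Y hcard' hcond'
          have hUlt : ∀ x ∈ X' ∪ Y, x < m := by
            intro x hx
            rw [hU] at hx
            exact lt_of_le_of_ne (hmax x (Finset.mem_of_mem_erase hx)) (Finset.ne_of_mem_erase hx)
          have hXY : X ∪ Y = insert m (X' ∪ Y) := by rw [hU, Finset.insert_erase hmem]
          calc eX X * eX Y = ka m * (eX X' * eX Y) := by rw [heX, mul_assoc]
            _ = ka m * eX (X' ∪ Y) := by rw [hih]
            _ = eX (X ∪ Y) := by rw [hXY, eX_insert hUlt]
      · -- m ∉ X, so m ∈ Y and X ⊆ Y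
        have hYm : m ∈ Y := (Finset.mem_union.mp hmem).resolve_left hX
        have hsub : X ⊆ Y := by
          intro i hi
          by_contra hiY
          have h1 : m < i := hcond i (Finset.mem_sdiff.mpr ⟨hi, hiY⟩) m
            (Finset.mem_sdiff.mpr ⟨hYm, hX⟩)
          exact absurd (hmax i (Finset.mem_union_left _ hi)) (not_le.mpr h1)
        rw [Finset.union_eq_right.mpr hsub]
        exact subset_absorb hsub

/-! ### A concrete representation used to rule out idempotency -/

instance : DecidableEq (Function.End (Fin 3)) :=
  (inferInstance : DecidableEq (Fin 3 → Fin 3))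

def fA : Function.End (Fin 3) := ![0, 0, 2]
def fB : Function.End (Fin 3) := ![2, 1, 2]

lemma keyrel : ∀ p q : Function.End (Fin 3),
    (p = fA ∨ p = fB ∨ p = 1) → (q = fA ∨ q = fB ∨ q = 1) → ¬(p = fB ∧ q = fA) →
    (p * q * p = q * p ∧ q * p * q = q * p) := by
  rintro _ _ (rfl | rfl | rfl) (rfl | rfl | rfl) hpq <;>
    first
      | exact ⟨by decide, by decide⟩
      | exact absurd ⟨rfl, rfl⟩ hpq

variable {i0 j0 : Fin n}

/-- The map sending `a_{i0} ↦ fA`, `a_{j0} ↦ fB` and all other generators to `1`. -/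
def g (i0 j0 : Fin n) : Fin n → Function.End (Fin 3) :=
  fun k => if k = i0 then fA else if k = j0 then fB else 1

lemma g_cases (k : Fin n) : g i0 j0 k = fA ∨ g i0 j0 k = fB ∨ g i0 j0 k = 1 := by
  unfold g; split_ifs <;> tauto

lemma g_eq_fA {k : Fin n} (h : g i0 j0 k = fA) : k = i0 := by
  by_contra hk
  unfold g at h
  rw [if_neg hk] at h
  split_ifs at h
  · exact absurd h (by decide)
  · exact absurd h (by decide)

lemma g_eq_fB {k : Fin n} (h : g i0 j0 k = fB) : k = j0 := by
  by_contra hk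
  unfold g at h
  split_ifs at h with h1
  · exact absurd h (by decide)
  · exact absurd h (by decide)

lemma hrels (hij : i0 < j0) : ∀ a b : FreeMonoid (Fin n), KisRel n a b →
    FreeMonoid.lift (g i0 j0) a = FreeMonoid.lift (g i0 j0) b := by
  intro a b h
  have hexcl : ∀ {i j : Fin n}, i < j → ¬(g i0 j0 i = fB ∧ g i0 j0 j = fA) := by
    rintro i j hlt ⟨h1, h2⟩
    rw [g_eq_fB h1, g_eq_fA h2] at hlt
    exact lt_asymm hij hlt
  cases h with
  | idem i =>
    simp only [map_mul, FreeMonoid.lift_eval_of]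
    rcases g_cases (i0 := i0) (j0 := j0) i with h | h | h <;> rw [h] <;> decide
  | braid₁ hlt =>
    simp only [map_mul, FreeMonoid.lift_eval_of]
    exact (keyrel _ _ (g_cases _) (g_cases _) (hexcl hlt)).1
  | braid₂ hlt =>
    simp only [map_mul, FreeMonoid.lift_eval_of]
    exact (keyrel _ _ (g_cases _) (g_cases _) (hexcl hlt)).2

/-- The induced monoid homomorphism from the Kiselman monoid. -/
def φ (hij : i0 < j0) : Kiselman n →* Function.End (Fin 3) :=
  PresentedMonoid.lift (g i0 j0) (hrels hij)

lemma φ_mk (hij : i0 < j0) (w : FreeMonoid (Fin n)) :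
    φ hij (kmk n w) = FreeMonoid.lift (g i0 j0) w := rfl

lemma lift_ofList {M : Type*} [Monoid M] (f : Fin n → M) :
    ∀ L : List (Fin n), FreeMonoid.lift f (FreeMonoid.ofList L) = (L.map f).prod := by
  intro L
  induction L with
  | nil => simp
  | cons x L ih =>
    have : FreeMonoid.ofList (x :: L) = FreeMonoid.of x * FreeMonoid.ofList L := rfl
    rw [this, map_mul, FreeMonoid.lift_eval_of, List.map_cons, List.prod_cons, ih]

lemma prod_single {M : Type*} [Monoid M] (f : Fin n → M) (a : Fin n) :
    ∀ L : List (Fin n), L.Nodup → a ∈ L → (∀ x ∈ L, x ≠ a → f x = 1) →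
    (L.map f).prod = f a := by
  intro L
  induction L with
  | nil => intro _ h; simp at h
  | cons x L ih =>
    intro hnd hmem hone
    rw [List.nodup_cons] at hnd
    rw [List.map_cons, List.prod_cons]
    rcases List.mem_cons.mp hmem with rfl | hmem'
    · have h1 : (L.map f).prod = 1 := by
        apply List.prod_eq_one
        intro y hy
        obtain ⟨z, hz, rfl⟩ := List.mem_map.mp hy
        exact hone z (List.mem_cons_of_mem _ hz) (fun h => hnd.1 (h ▸ hz))
      rw [h1, mul_one]
    · have hx1 : f x = 1 := hone x (by simp) (fun h => hnd.1 (h ▸ hmem'))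
      rw [hx1, one_mul]
      exact ih hnd.2 hmem' (fun z hz => hone z (List.mem_cons_of_mem _ hz))

lemma φ_eX (hij : i0 < j0) {a : Fin n} {X : Finset (Fin n)} (ha : a ∈ X)
    (hone : ∀ x ∈ X, x ≠ a → g i0 j0 x = 1) :
    φ hij (eX X) = g i0 j0 a := by
  rw [eX_eq X, eL, φ_mk, lift_ofList]
  apply prod_single
  · exact List.nodup_reverse.mpr (Finset.sort_nodup _ _)
  · simpa [Finset.mem_sort] using ha
  · intro x hx hxa
    exact hone x (by simpa [Finset.mem_sort] using hx) hxa

lemma not_idem {X Y : Finset (Fin n)} (hi : i0 ∈ X) (hiY : i0 ∉ Y) (hj : j0 ∈ Y)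
    (hjX : j0 ∉ X) (hij : i0 < j0) : ¬ IsIdempotentElem (eX X * eX Y) := by
  intro hIdem
  have hA : φ hij (eX X) = fA := by
    rw [φ_eX hij hi ?_]
    · exact if_pos rfl
    · intro x hx hxa
      have hxb : x ≠ j0 := fun h => hjX (h ▸ hx)
      simp [g, hxa, hxb]
  have hB : φ hij (eX Y) = fB := by
    rw [φ_eX hij hj ?_]
    · have h1 : j0 ≠ i0 := ne_of_gt hij
      simp [g, h1]
    · intro x hx hxa
      have hxb : x ≠ i0 := fun h => hiY (h ▸ hx)
      simp [g, hxa, hxb]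
  have := congrArg (φ hij) hIdem
  simp only [map_mul, hA, hB] at this
  exact absurd this (by decide)

end KisAux

/-- Proposition: `e_X e_Y` is idempotent iff `e_X e_Y = e_{X ∪ Y}` iff every
`i ∈ X∖Y` is greater than every `j ∈ Y∖X`. -/
theorem kiselman_product_of_idempotents (n : ℕ) (X Y : Finset (Fin n)) :
    (IsIdempotentElem (eX X * eX Y) ↔ eX X * eX Y = eX (X ∪ Y)) ∧
    (IsIdempotentElem (eX X * eX Y) ↔ ∀ i ∈ X \ Y, ∀ j ∈ Y \ X, j < i) := by
  have idem_to_cond : IsIdempotentElem (eX X * eX Y) →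
      ∀ i ∈ X \ Y, ∀ j ∈ Y \ X, j < i := by
    intro hIdem i hi j hj
    rw [Finset.mem_sdiff] at hi hj
    by_contra hlt
    have hij : i < j := lt_of_le_of_ne (not_lt.mp hlt)
      (fun h => hi.2 (h ▸ hj.1))
    exact KisAux.not_idem hi.1 hi.2 hj.1 hj.2 hij hIdem
  have cond_to_eq : (∀ i ∈ X \ Y, ∀ j ∈ Y \ X, j < i) →
      eX X * eX Y = eX (X ∪ Y) :=
    fun h => KisAux.main (X ∪ Y).card X Y le_rfl h
  have eq_to_idem : eX X * eX Y = eX (X ∪ Y) → IsIdempotentElem (eX X * eX Y) := by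
    intro h
    unfold IsIdempotentElem
    rw [h]
    exact KisAux.eX_idem (X ∪ Y)
  exact ⟨⟨fun h => cond_to_eq (idem_to_cond h), eq_to_idem⟩,
    ⟨idem_to_cond, fun h => eq_to_idem (cond_to_eq h)⟩⟩
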